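/- Let L : [0,∞) → [0,∞) be convex increasing with L(0) = 0 and suppose L(R) − L(R − ε) → ∞ as R → ∞ for every ε > 0. Let M be a proper geodesic metric space and φ a c_L-concave function on M with interior of {φ > −∞} containing a point x̄ and a ball B_{2r}(x̄) on which φ is real-valued and bounded. Then there exists C > 0 such that for every x ∈ B_r(x̄), any minimizing sequence y_n (i.e. c_L(x,y_n) − φ^{c_L}(y_n) → φ(x)) is eventually contained in the ball B_C(x̄). -/

import Mathlib

open Filter Topology

theorem stmt18 {M : Type*} [MetricSpace M] [ProperSpace M]
    (hgeo : ∀ x y : M, ∀ t ∈ Set.Icc (0:ℝ) 1,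
      ∃ z : M, dist x z = t * dist x y ∧ dist z y = (1 - t) * dist x y)
    (L : ℝ → ℝ) (hconv : ConvexOn ℝ (Set.Ici 0) L)
    (hmono : MonotoneOn L (Set.Ici 0)) (hL0 : L 0 = 0)
    (hLinf : ∀ ε > (0:ℝ), Tendsto (fun R => L R - L (R - ε)) atTop atTop)
    (φ : M → EReal)
    (hconc : ∃ ψ : M → EReal,
      ∀ x : M, φ x = ⨅ y : M, ((L (dist x y) : ℝ) : EReal) - ψ y)
    (xb : M) (r : ℝ) (hr : 0 < r)
    (hmem : xb ∈ interior {z : M | φ z ≠ ⊥})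
    (hreal : ∀ a ∈ Metric.ball xb (2 * r), ∃ v : ℝ, φ a = (v : EReal))
    (hbdd : ∃ B : ℝ, ∀ a ∈ Metric.ball xb (2 * r), |(φ a).toReal| ≤ B) :
    ∃ C > (0:ℝ), ∀ x ∈ Metric.ball xb r, ∀ y : ℕ → M,
      Tendsto (fun n => ((L (dist x (y n)) : ℝ) : EReal) -
          (⨅ z : M, ((L (dist z (y n)) : ℝ) : EReal) - φ z))
        atTop (𝓝 (φ x)) →
      ∃ N : ℕ, ∀ n ≥ N, y n ∈ Metric.ball xb C := by
  obtain ⟨B, hB⟩ := hbdd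
  obtain ⟨R₀, hR₀⟩ := eventually_atTop.1 ((hLinf r hr).eventually_ge_atTop (2*B+1))
  have hmaxpos : (0:ℝ) < max R₀ (2*r) := lt_of_lt_of_le (by linarith) (le_max_right _ _)
  refine ⟨max R₀ (2*r) + r + 1, by linarith, fun x hx y hy => ?_⟩
  rw [Metric.mem_ball] at hx
  have hx2 : x ∈ Metric.ball xb (2*r) := by rw [Metric.mem_ball]; linarith
  obtain ⟨vx, hvx⟩ := hreal x hx2
  have hvxB : |vx| ≤ B := by
    have := hB x hx2; rwa [hvx, EReal.toReal_coe] at this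
  have hlt : ((vx : EReal)) < ((B + 1 : ℝ) : EReal) := by
    exact_mod_cast lt_of_le_of_lt (le_abs_self vx) (by linarith)
  rw [hvx] at hy
  obtain ⟨N, hN⟩ := eventually_atTop.1 (hy.eventually_lt_const hlt)
  refine ⟨N, fun n hn => ?_⟩
  have hEn := hN n hn
  have key : dist x (y n) ≤ max R₀ (2*r) := by
    by_contra h
    push_neg at h
    set Rn := dist x (y n) with hRndef
    have hRr : r ≤ Rn := by
      have h2 := le_max_right R₀ (2*r); linarith
    have hRpos : 0 < Rn := lt_of_lt_of_le hr hRr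
    obtain ⟨z, hz1, hz2⟩ := hgeo x (y n) (r / Rn)
      ⟨by positivity, by rw [div_le_one hRpos]; exact hRr⟩
    rw [div_mul_cancel₀ r hRpos.ne'] at hz1
    have hz2' : dist z (y n) = Rn - r := by
      rw [hz2, ← hRndef, sub_mul, one_mul, div_mul_cancel₀ r hRpos.ne']
    have hzball : z ∈ Metric.ball xb (2*r) := by
      rw [Metric.mem_ball]
      have := dist_triangle z x xb
      rw [dist_comm z x, hz1] at this
      linarith
    obtain ⟨vz, hvz⟩ := hreal z hzball
    have hvzB : |vz| ≤ B := by
      have := hB z hzball; rwa [hvz, EReal.toReal_coe] at this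
    have hinf : (⨅ w : M, ((L (dist w (y n)) : ℝ) : EReal) - φ w)
        ≤ ((L (Rn - r) - vz : ℝ) : EReal) := by
      calc (⨅ w : M, ((L (dist w (y n)) : ℝ) : EReal) - φ w)
          ≤ ((L (dist z (y n)) : ℝ) : EReal) - φ z :=
            iInf_le (fun w => ((L (dist w (y n)) : ℝ) : EReal) - φ w) z
        _ = ((L (Rn - r) - vz : ℝ) : EReal) := by
            rw [hz2', hvz, EReal.coe_sub]
    have hE : ((L Rn - (L (Rn - r) - vz) : ℝ) : EReal)
        ≤ ((L Rn : ℝ) : EReal) - (⨅ w : M, ((L (dist w (y n)) : ℝ) : EReal) - φ w) := by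
      rw [EReal.coe_sub]
      exact EReal.sub_le_sub le_rfl hinf
    have hfinal : ((L Rn - (L (Rn - r) - vz) : ℝ) : EReal) < ((B + 1 : ℝ) : EReal) :=
      lt_of_le_of_lt hE hEn
    have hreallt : L Rn - (L (Rn - r) - vz) < B + 1 := by exact_mod_cast hfinal
    have hRge : R₀ ≤ Rn := le_of_lt (lt_of_le_of_lt (le_max_left _ _) h)
    have hLbig := hR₀ Rn hRge
    have hvzlow : -B ≤ vz := neg_le_of_abs_le hvzB
    linarith
  rw [Metric.mem_ball]
  have htri := dist_triangle (y n) x xb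
  rw [dist_comm (y n) x] at htri
  linarith
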